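/- For a bosonic multiline queue D of type (λ,n) and site i ∈ ℤ_n, let F̃(D,i) = (D', j). Then the weight monomial satisfies x^{D'} = x^D · x_{j+1} · x_i^{−1}. Equivalently, if column i of D is empty then D' = D and j+1 = i, otherwise the total number of particles at site i (summed over all rows) decreases by one and at site j+1 increases by one, all other column totals being unchanged. -/

import Mathlib

/-- Forward ringing path on a bosonic multiline queue (rows indexed from `0`):
`bfPath D i j = 𝔞_{j+1}`, with `𝔞_1 = i` and `𝔞_{j+1} = 𝔞_j` if `𝔞_j ∉ D_j`,
otherwise `𝔞_j + 1` (mod `n`). -/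
def bfPath {n : ℕ} (D : ℕ → Multiset (ZMod n)) (i : ZMod n) : ℕ → ZMod n
  | 0 => i
  | j + 1 => if bfPath D i j ∈ D j then bfPath D i j + 1 else bfPath D i j

/-- Forward ringing transition `F̃(D, i) = (D', 𝔞_{L+1} − 1)`: in each row `j` with
`𝔞_j ∈ D_j`, one particle hops from site `𝔞_j` to site `𝔞_j + 1`. -/
def bF {n : ℕ} (L : ℕ) (D : ℕ → Multiset (ZMod n)) (i : ZMod n) :
    (ℕ → Multiset (ZMod n)) × ZMod n :=
  (fun j =>
    if j < L then
      (if bfPath D i j ∈ D j then (bfPath D i j + 1) ::ₘ (D j).erase (bfPath D i j) else D j)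
    else D j,
   bfPath D i L - 1)

/-- Reverse ringing path: `brPath L D i t = 𝔟_{L−t}`, with `𝔟_L = i` and
`𝔟_j = 𝔟_{j+1}` if `𝔟_{j+1} + 1 ∉ D_{j+1}`, else `𝔟_{j+1} − 1`
(rows `1, …, L` of the paper are indexed `0, …, L-1` here). -/
def brPath {n : ℕ} (L : ℕ) (D : ℕ → Multiset (ZMod n)) (i : ZMod n) : ℕ → ZMod n
  | 0 => i
  | t + 1 =>
    if brPath L D i t + 1 ∈ D (L - 1 - t) then brPath L D i t - 1 else brPath L D i t

/-- Reverse ringing transition `R̃(D, i) = (D'', 𝔟_0 + 1)`: in each row `j` with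
`𝔟_j + 1 ∈ D_j`, one particle hops from site `𝔟_j + 1` to site `𝔟_j`. -/
def bR {n : ℕ} (L : ℕ) (D : ℕ → Multiset (ZMod n)) (i : ZMod n) :
    (ℕ → Multiset (ZMod n)) × ZMod n :=
  (fun j =>
    if j < L then
      (let b := brPath L D i (L - 1 - j);
       if b + 1 ∈ D j then b ::ₘ (D j).erase (b + 1) else D j)
    else D j,
   brPath L D i L + 1)

/-- Total number of particles at site `s` (summed over all `L` rows). -/
def colCount {n : ℕ} (L : ℕ) (D : ℕ → Multiset (ZMod n)) (s : ZMod n) : ℕ :=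
  ∑ t ∈ Finset.range L, (D t).count s

/-- Column `s` of `D` is empty: no row contains site `s`. -/
def colEmpty {n : ℕ} (L : ℕ) (D : ℕ → Multiset (ZMod n)) (s : ZMod n) : Prop :=
  ∀ t, t < L → s ∉ D t

lemma bF_row_count {n L : ℕ} (D : ℕ → Multiset (ZMod n)) (i : ZMod n) (s : ZMod n)
    {j : ℕ} (hj : j < L) :
    ((((bF L D i).1 j).count s : ℤ))
      = ((D j).count s : ℤ) - (if s = bfPath D i j then 1 else 0)
          + (if s = bfPath D i (j+1) then 1 else 0) := by
  by_cases h : bfPath D i j ∈ D j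
  · have hcount : 1 ≤ (D j).count (bfPath D i j) := Multiset.one_le_count_iff_mem.mpr h
    simp only [bF, hj, if_pos, h, if_true, bfPath]
    rw [Multiset.count_cons]
    by_cases hs : s = bfPath D i j
    · subst hs
      rw [Multiset.count_erase_self, if_pos rfl]
      push_cast [Nat.cast_sub hcount]
      ring
    · rw [Multiset.count_erase_of_ne hs]
      push_cast
      simp [hs]
      try ring
  · simp only [bF, hj, if_pos, h, if_false, if_neg, bfPath]
    try ring

lemma bfPath_eq_of_colEmpty {n L : ℕ} (D : ℕ → Multiset (ZMod n)) (i : ZMod n)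
    (hE : colEmpty L D i) : ∀ j, j ≤ L → bfPath D i j = i := by
  intro j
  induction j with
  | zero => intro _; rfl
  | succ k ih =>
    intro hk
    have hk' : k ≤ L := Nat.le_of_succ_le hk
    have hkL : k < L := hk
    have hki := ih hk'
    simp only [bfPath, hki]
    simp [hE k hkL]

lemma bF_colCount {n L : ℕ} (D : ℕ → Multiset (ZMod n)) (i : ZMod n) (s : ZMod n) :
    (colCount L (bF L D i).1 s : ℤ)
      = (colCount L D s : ℤ) - (if s = i then 1 else 0)
          + (if s = (bF L D i).2 + 1 then 1 else 0) := by
  have h2 : (bF L D i).2 + 1 = bfPath D i L := by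
    simp [bF]
  rw [h2]
  unfold colCount
  push_cast
  have hrow : ∀ j ∈ Finset.range L,
      ((((bF L D i).1 j).count s : ℤ))
        = ((D j).count s : ℤ) + ((if s = bfPath D i (j+1) then (1:ℤ) else 0)
            - (if s = bfPath D i j then 1 else 0)) := by
    intro j hj
    rw [bF_row_count D i s (Finset.mem_range.mp hj)]
    ring
  rw [Finset.sum_congr rfl hrow, Finset.sum_add_distrib,
    Finset.sum_range_sub (f := fun j => if s = bfPath D i j then (1:ℤ) else 0)]
  simp only [bfPath]
  ring
  rfl

/-- with `F̃(D, i) = (D', j)`, the weight monomial satisfies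
`x^{D'} = x^D · x_{j+1} · x_i^{−1}`.  Equivalently: the column totals of `D'` are those of
`D` with one particle removed from column `i` and one added to column `j+1` (so if column
`i` is empty then `D' = D` and `j + 1 = i`). -/
theorem bosonic_forward_weight (n L : ℕ) [NeZero n] (D : ℕ → Multiset (ZMod n))
    (i : ZMod n) (x : ZMod n → ℝ) (hx : ∀ s, 0 < x s) :
    (∀ s : ZMod n,
      (colCount L (bF L D i).1 s : ℤ)
        = (colCount L D s : ℤ) - (if s = i then 1 else 0)
            + (if s = (bF L D i).2 + 1 then 1 else 0)) ∧
    (∏ s : ZMod n, x s ^ colCount L (bF L D i).1 s)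
      = (∏ s : ZMod n, x s ^ colCount L D s) * x ((bF L D i).2 + 1) / x i ∧
    (colEmpty L D i → (bF L D i).1 = D ∧ (bF L D i).2 + 1 = i) := by
  refine ⟨fun s => bF_colCount (L := L) D i s, ?_, ?_⟩
  · have key : ∀ s : ZMod n,
        x s ^ colCount L (bF L D i).1 s
          = x s ^ colCount L D s
              * (if s = (bF L D i).2 + 1 then x s else 1)
              * (if s = i then x s else 1)⁻¹ := by
      intro s
      have hxs := hx s
      have h := bF_colCount (L := L) D i s
      have : x s ^ ((colCount L (bF L D i).1 s : ℤ))
          = x s ^ ((colCount L D s : ℤ)) * x s ^ (if s = (bF L D i).2 + 1 then (1:ℤ) else 0)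
              * (x s ^ (if s = i then (1:ℤ) else 0))⁻¹ := by
        rw [h, ← zpow_neg]
        rw [← zpow_add₀ hxs.ne', ← zpow_add₀ hxs.ne']
        ring_nf
      rw [zpow_natCast, zpow_natCast] at this
      rw [this]
      congr 1
      · congr 1
        split <;> simp
      · split <;> simp
    rw [Finset.prod_congr rfl (fun s _ => key s), Finset.prod_mul_distrib,
      Finset.prod_mul_distrib, Finset.prod_inv_distrib]
    rw [Finset.prod_ite_eq' Finset.univ ((bF L D i).2 + 1) x,
      Finset.prod_ite_eq' Finset.univ i x]
    simp [div_eq_mul_inv]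
  · intro hE
    have hpath := bfPath_eq_of_colEmpty D i hE
    constructor
    · funext j
      simp only [bF]
      by_cases hj : j < L
      · simp [hj, hE j hj, hpath j hj.le]
      · simp [hj]
    · simp [bF, hpath L le_rfl]
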